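/- With φ_T as defined (φ_T(M₁,M₂,n) = -∑ over squarefree d > 1 with all prime factors ≤ n of μ(d)·⌊((M₁ mod d)+(M₂ mod d))/d⌋), for every natural number n ≥ 1: if φ_T(n², 2n, n) ≤ π(2n) - π(n), then π((n+1)²) - π(n²) ≥ 1, i.e., there is a prime strictly between n² and (n+1)². -/

import Mathlib

open ArithmeticFunction Nat Finset
open scoped ArithmeticFunction.Moebius

/-- Index set: squarefree `d > 1` all of whose prime factors are `≤ n`. -/
def sqfSet (n : ℕ) : Finset ℕ :=
  (Finset.range (primorial n + 1)).filter
    (fun d => 1 < d ∧ Squarefree d ∧ ∀ p ∈ d.primeFactors, p ≤ n)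

/-- The transformed Legendre function `φ_T`. -/
def phiT (M₁ M₂ n : ℕ) : ℤ :=
  -∑ d ∈ sqfSet n, μ d * (((M₁ % d + M₂ % d) / d : ℕ) : ℤ)

lemma squarefree_primorial' (n : ℕ) : Squarefree (primorial n) := by
  unfold primorial
  set s := (Finset.range (n+1)).filter Nat.Prime with hs
  have hp : ∀ p ∈ s, p.Prime := fun p hp => (Finset.mem_filter.1 hp).2
  clear_value s
  clear hs
  induction s using Finset.induction with
  | empty => simp
  | @insert a t ha ih =>
    rw [Finset.prod_insert ha]
    have hap : a.Prime := hp a (Finset.mem_insert_self a t)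
    have ht : ∀ p ∈ t, p.Prime := fun p hpt => hp p (Finset.mem_insert_of_mem hpt)
    rw [Nat.squarefree_mul_iff]
    refine ⟨?_, hap.squarefree, ih ht⟩
    rw [hap.coprime_iff_not_dvd]
    intro hdvd
    have : a ∈ t := by
      have h2 := Nat.primeFactors_prod ht
      rw [← h2]
      exact Nat.mem_primeFactors.2
        ⟨hap, hdvd, Finset.prod_ne_zero_iff.2 fun p hpt => (ht p hpt).ne_zero⟩
    exact ha this

lemma mem_divisors_primorial {n d : ℕ} :
    d ∈ (primorial n).divisors ↔
      d ≠ 0 ∧ Squarefree d ∧ ∀ p ∈ d.primeFactors, p ≤ n := by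
  rw [Nat.mem_divisors]
  constructor
  · rintro ⟨hdvd, hne⟩
    have hsq : Squarefree d := (squarefree_primorial' n).squarefree_of_dvd hdvd
    refine ⟨hsq.ne_zero, hsq, fun p hpd => ?_⟩
    have hpP : p ∣ primorial n := (Nat.mem_primeFactors.1 hpd).2.1.trans hdvd
    have hpp : p.Prime := (Nat.mem_primeFactors.1 hpd).1
    have hmem : p ∈ (Finset.range (n+1)).filter Nat.Prime := by
      unfold primorial at hpP
      rcases (Prime.dvd_finset_prod_iff hpp.prime _).1 hpP with ⟨q, hq, hpq⟩
      have hqp : q.Prime := (Finset.mem_filter.1 hq).2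
      rwa [(hqp.dvd_iff_eq hpp.ne_one).1 hpq] at hq
    exact Nat.lt_succ_iff.1 (Finset.mem_range.1 (Finset.mem_filter.1 hmem).1)
  · rintro ⟨hd0, hsq, hle⟩
    refine ⟨?_, (primorial_pos n).ne'⟩
    have hd : d = ∏ p ∈ d.primeFactors, p := (Nat.prod_primeFactors_of_squarefree hsq).symm
    rw [hd]
    unfold primorial
    apply Finset.prod_dvd_prod_of_subset
    intro p hp
    exact Finset.mem_filter.2 ⟨Finset.mem_range.2 (Nat.lt_succ_of_le (hle p hp)),
      (Nat.mem_primeFactors.1 hp).1⟩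

lemma sqfSet_eq (n : ℕ) : sqfSet n = (primorial n).divisors.erase 1 := by
  ext d
  simp only [sqfSet, Finset.mem_filter, Finset.mem_range, Finset.mem_erase,
    mem_divisors_primorial]
  constructor
  · rintro ⟨_, h1, hsq, hle⟩
    exact ⟨by omega, by omega, hsq, hle⟩
  · rintro ⟨h1, h0, hsq, hle⟩
    have hdvd : d ∣ primorial n :=
      (Nat.mem_divisors.1 (mem_divisors_primorial.2 ⟨h0, hsq, hle⟩)).1
    have hled := Nat.le_of_dvd (primorial_pos n) hdvd
    exact ⟨by omega, by omega, hsq, hle⟩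

open scoped ArithmeticFunction.zeta

lemma sum_moebius_divisors {k : ℕ} :
    ∑ d ∈ k.divisors, (μ d : ℤ) = if k = 1 then 1 else 0 := by
  have h1 : ((μ * ζ : ArithmeticFunction ℤ)) k = ∑ d ∈ k.divisors, (μ d : ℤ) :=
    ArithmeticFunction.coe_mul_zeta_apply
  rw [ArithmeticFunction.moebius_mul_coe_zeta] at h1
  rw [← h1, ArithmeticFunction.one_apply]

lemma legendre_sum (P : ℕ) (hP : P ≠ 0) (x : ℕ) :
    (((Finset.Ioc 0 x).filter (fun m => Nat.Coprime m P)).card : ℤ)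
      = ∑ d ∈ P.divisors, μ d * ((x / d : ℕ) : ℤ) := by
  have hgcd : ∀ m : ℕ, (Nat.gcd m P).divisors = P.divisors.filter (· ∣ m) := by
    intro m
    ext e
    simp only [Nat.mem_divisors, Finset.mem_filter]
    constructor
    · rintro ⟨he, _⟩
      exact ⟨⟨he.trans (Nat.gcd_dvd_right m P), hP⟩, he.trans (Nat.gcd_dvd_left m P)⟩
    · rintro ⟨⟨heP, _⟩, hem⟩
      exact ⟨Nat.dvd_gcd hem heP, Nat.gcd_ne_zero_right hP⟩
  calc (((Finset.Ioc 0 x).filter (fun m => Nat.Coprime m P)).card : ℤ)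
      = ∑ m ∈ Finset.Ioc 0 x, (if Nat.Coprime m P then (1:ℤ) else 0) := by
        rw [← Finset.sum_boole]
    _ = ∑ m ∈ Finset.Ioc 0 x, ∑ d ∈ P.divisors, (if d ∣ m then (μ d : ℤ) else 0) := by
        refine Finset.sum_congr rfl fun m hm => ?_
        rw [← Finset.sum_filter, ← hgcd m, sum_moebius_divisors]

    _ = ∑ d ∈ P.divisors, ∑ m ∈ Finset.Ioc 0 x, (if d ∣ m then (μ d : ℤ) else 0) :=
        Finset.sum_comm
    _ = ∑ d ∈ P.divisors, μ d * ((x / d : ℕ) : ℤ) := by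
        refine Finset.sum_congr rfl fun d hd => ?_
        rw [← Finset.sum_filter, Finset.sum_const, nsmul_eq_mul,
          Nat.Ioc_filter_dvd_card_eq_div, mul_comm]

lemma coprime_primorial_iff {n m : ℕ} :
    Nat.Coprime m (primorial n) ↔ ∀ p, p.Prime → p ≤ n → ¬ p ∣ m := by
  unfold primorial
  rw [Nat.coprime_prod_right_iff]
  constructor
  · intro h p hp hpn hdvd
    have hmem : p ∈ (Finset.range (n+1)).filter Nat.Prime :=
      Finset.mem_filter.2 ⟨Finset.mem_range.2 (Nat.lt_succ_of_le hpn), hp⟩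
    have := h p hmem
    rw [Nat.coprime_comm, hp.coprime_iff_not_dvd] at this
    exact this hdvd
  · intro h p hpmem
    have hp : p.Prime := (Finset.mem_filter.1 hpmem).2
    have hpn : p ≤ n := Nat.lt_succ_iff.1 (Finset.mem_range.1 (Finset.mem_filter.1 hpmem).1)
    rw [Nat.coprime_comm, hp.coprime_iff_not_dvd]
    exact h p hp hpn

/-- a coprime-to-primorial number in `(n, n²+2n]` is prime -/
lemma prime_of_coprime_primorial {n m : ℕ} (hn : 1 ≤ n) (h1 : n < m)
    (h2 : m ≤ n ^ 2 + 2 * n) (hc : Nat.Coprime m (primorial n)) : m.Prime := by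
  by_contra hnp
  have hm2 : 2 ≤ m := by omega
  have hmf : m.minFac.Prime := Nat.minFac_prime (by omega)
  have hlow : ¬ m.minFac ≤ n := fun hle =>
    (coprime_primorial_iff.1 hc) m.minFac hmf hle (Nat.minFac_dvd m)
  have hsq : m.minFac ^ 2 ≤ m := Nat.minFac_sq_le_self (by omega) hnp
  have : (n + 1) ^ 2 ≤ m.minFac ^ 2 := Nat.pow_le_pow_left (by omega) 2
  nlinarith

/-- primes in `(n, 2n]` are coprime to the primorial -/
lemma coprime_primorial_of_prime {n m : ℕ} (hp : m.Prime) (h1 : n < m) :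
    Nat.Coprime m (primorial n) := by
  rw [coprime_primorial_iff]
  intro p hpp hpn hdvd
  rcases (Nat.prime_dvd_prime_iff_eq hpp hp).1 hdvd with rfl
  omega

lemma card_coprime_Ioc (n : ℕ) (hn : 1 ≤ n) :
    ((Finset.Ioc 0 (2 * n)).filter (fun m => Nat.Coprime m (primorial n))).card
      = (Nat.primeCounting (2 * n) - Nat.primeCounting n) + 1 := by
  have hset : (Finset.Ioc 0 (2 * n)).filter (fun m => Nat.Coprime m (primorial n))
      = insert 1 ((Finset.Ioc n (2 * n)).filter Nat.Prime) := by
    ext m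
    simp only [Finset.mem_filter, Finset.mem_Ioc, Finset.mem_insert]
    constructor
    · rintro ⟨⟨hm0, hm2n⟩, hc⟩
      rcases Nat.eq_or_lt_of_le (show 1 ≤ m by omega) with h1 | h1
      · exact Or.inl h1.symm
      · right
        have hmf : m.minFac.Prime := Nat.minFac_prime (by omega)
        have hle : ¬ m.minFac ≤ n := fun hle =>
          (coprime_primorial_iff.1 hc) m.minFac hmf hle (Nat.minFac_dvd m)
        have hnm : n < m := lt_of_lt_of_le (by omega : n < m.minFac)
          (Nat.minFac_le (by omega))
        exact ⟨⟨hnm, hm2n⟩,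
          prime_of_coprime_primorial hn hnm (by nlinarith) hc⟩
    · rintro (rfl | ⟨⟨hnm, hm2n⟩, hp⟩)
      · exact ⟨⟨one_pos, by omega⟩, Nat.coprime_one_left _⟩
      · exact ⟨⟨by omega, hm2n⟩, coprime_primorial_of_prime hp hnm⟩
  rw [hset, Finset.card_insert_of_notMem (by
    simp only [Finset.mem_filter, Finset.mem_Ioc]
    rintro ⟨⟨h1, _⟩, _⟩
    omega)]
  have hpc : Nat.primeCounting (2 * n)
      = Nat.primeCounting n + ((Finset.Ioc n (2 * n)).filter Nat.Prime).card := by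
    rw [Nat.primeCounting, Nat.primeCounting, Nat.primeCounting',
      Nat.count_eq_card_filter_range, Nat.count_eq_card_filter_range]
    have hr : Finset.range (2 * n + 1)
        = Finset.range (n + 1) ∪ Finset.Ioc n (2 * n) := by
      ext k
      simp only [Finset.mem_range, Finset.mem_union, Finset.mem_Ioc]
      omega
    rw [hr, Finset.filter_union, Finset.card_union_of_disjoint]
    apply Finset.disjoint_filter_filter
    rw [Finset.disjoint_left]
    intro k hk hk2
    simp only [Finset.mem_range] at hk
    simp only [Finset.mem_Ioc] at hk2
    omega
  omega

theorem stmt_4 (n : ℕ) (hn : 1 ≤ n)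
    (h : phiT (n ^ 2) (2 * n) n ≤ (Nat.primeCounting (2 * n) : ℤ) - Nat.primeCounting n) :
    ∃ p, p.Prime ∧ n ^ 2 < p ∧ p < (n + 1) ^ 2 := by
  set P := primorial n with hPdef
  have hP0 : P ≠ 0 := (primorial_pos n).ne'
  -- the error term over all divisors equals -phiT
  have hT : ∑ d ∈ P.divisors, (μ d : ℤ) * (((n ^ 2 % d + 2 * n % d) / d : ℕ) : ℤ)
      = -phiT (n ^ 2) (2 * n) n := by
    rw [phiT, sqfSet_eq, neg_neg, ← hPdef]
    rw [← Finset.add_sum_erase _ _ (Nat.one_mem_divisors.2 hP0)]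
    simp
  -- divisor-wise floor splitting
  have hsplit : ∀ d ∈ P.divisors,
      ((n ^ 2 + 2 * n) / d : ℕ) = n ^ 2 / d + 2 * n / d + (n ^ 2 % d + 2 * n % d) / d := by
    intro d hd
    have hd0 : 0 < d := Nat.pos_of_mem_divisors hd
    have ha : n ^ 2 % d < d := Nat.mod_lt _ hd0
    have hb : 2 * n % d < d := Nat.mod_lt _ hd0
    rw [Nat.add_div hd0]
    congr 1
    rcases le_or_gt d (n ^ 2 % d + 2 * n % d) with hle | hlt
    · rw [if_pos hle]
      exact (Nat.div_eq_of_lt_le (by omega) (by omega)).symm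
    · rw [if_neg (not_le.2 hlt), Nat.div_eq_of_lt hlt]
  -- Legendre sums
  have hL1 := legendre_sum P hP0 (n ^ 2 + 2 * n)
  have hL2 := legendre_sum P hP0 (n ^ 2)
  have hL3 := legendre_sum P hP0 (2 * n)
  have hmain :
      ((((Finset.Ioc 0 (n ^ 2 + 2 * n)).filter (fun m => Nat.Coprime m P)).card : ℤ))
        = (((Finset.Ioc 0 (n ^ 2)).filter (fun m => Nat.Coprime m P)).card : ℤ)
          + (((Finset.Ioc 0 (2 * n)).filter (fun m => Nat.Coprime m P)).card : ℤ)
          - phiT (n ^ 2) (2 * n) n := by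
    rw [hL1, hL2, hL3, sub_eq_add_neg, ← hT]
    rw [← Finset.sum_add_distrib, ← Finset.sum_add_distrib]
    refine Finset.sum_congr rfl fun d hd => ?_
    rw [hsplit d hd]
    push_cast
    ring
  -- the middle count
  have hmid := card_coprime_Ioc n hn
  have hmono : Nat.primeCounting n ≤ Nat.primeCounting (2 * n) :=
    Nat.monotone_primeCounting (by omega)
  have hmid' : ((((Finset.Ioc 0 (2 * n)).filter (fun m => Nat.Coprime m P)).card : ℤ))
      = (Nat.primeCounting (2 * n) : ℤ) - Nat.primeCounting n + 1 := by
    rw [← hPdef] at hmid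
    rw [hmid]
    push_cast [hmono]
    ring
  -- cardinality inequality
  have hcard : (((Finset.Ioc 0 (n ^ 2)).filter (fun m => Nat.Coprime m P)).card)
      < (((Finset.Ioc 0 (n ^ 2 + 2 * n)).filter (fun m => Nat.Coprime m P)).card) := by
    have : (((Finset.Ioc 0 (n ^ 2)).filter (fun m => Nat.Coprime m P)).card : ℤ) + 1
        ≤ (((Finset.Ioc 0 (n ^ 2 + 2 * n)).filter (fun m => Nat.Coprime m P)).card : ℤ) := by
      rw [hmain, hmid']
      linarith
    exact_mod_cast this
  have hsub : ((Finset.Ioc 0 (n ^ 2)).filter (fun m => Nat.Coprime m P))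
      ⊆ ((Finset.Ioc 0 (n ^ 2 + 2 * n)).filter (fun m => Nat.Coprime m P)) :=
    Finset.filter_subset_filter _ (Finset.Ioc_subset_Ioc_right (by omega))
  obtain ⟨m, hmA, hmB⟩ := Finset.exists_of_ssubset
    (Finset.ssubset_iff_subset_ne.2 ⟨hsub, fun he => absurd (congrArg Finset.card he)
      (Nat.ne_of_lt hcard)⟩)
  simp only [Finset.mem_filter, Finset.mem_Ioc] at hmA hmB
  have hm2 : n ^ 2 < m := by
    by_contra hle
    exact hmB ⟨⟨hmA.1.1, by omega⟩, hmA.2⟩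
  have hnm : n < m := by nlinarith
  have hprime : m.Prime := prime_of_coprime_primorial hn hnm hmA.1.2 hmA.2
  exact ⟨m, hprime, hm2, by nlinarith [hmA.1.2]⟩
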